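/- (Reduction in users' total energy cost.) Assume some r' ≥ 0 satisfies f^No(r') ≥ ξ and let r‡ be the largest r ≥ 0 with f^No(r) ≥ ξ. If (r*,π*) is an optimal solution of Problem-Ins, then users' total energy cost under the optimal insurance contract is no larger than under the no-insurance benchmark: Σ_k Σ_t (π_k^{*t} + p)·D_k^t ≤ Σ_t p·E[s^t(r‡,Θ^t)] + Σ_t Σ_k V_k^t·E[D_k^t − d_k^t(r‡,Θ^t)]. -/

import Mathlib

open MeasureTheory Finset

noncomputable section

variable {Ω : Type*} [MeasurableSpace Ω] {T : Type*} [Fintype T] {n : ℕ}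

/-- Supply at time `t` under capacity `r`: `s^t(r,Θ^t) = min(D_a^t, r·Θ^t)`. -/
def supplyF (Da : T → ℝ) (Θ : T → Ω → ℝ) (r : ℝ) (t : T) (ω : Ω) : ℝ :=
  min (Da t) (r * Θ t ω)

/-- Energy allocated to a user with demand profile `Di`:
`d_i^t(r,Θ^t) = (D_i^t/D_a^t)·s^t(r,Θ^t)`. -/
def allocF (Da : T → ℝ) (Θ : T → Ω → ℝ) (Di : T → ℝ) (r : ℝ) (t : T) (ω : Ω) : ℝ :=
  Di t / Da t * supplyF Da Θ r t ω

/-- Expected lost fraction `E[1 - s^t(r,Θ^t)/D_a^t]`. -/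
def lostFrac (μ : Measure Ω) (Da : T → ℝ) (Θ : T → Ω → ℝ) (r : ℝ) (t : T) : ℝ :=
  ∫ ω, (1 - supplyF Da Θ r t ω / Da t) ∂μ

/-- Cost `CU_i(m)` of a user with demand `Di` and values of lost load `Vi`
who chooses contract item `m`. -/
def CUins (μ : Measure Ω) (Da : T → ℝ) (Θ : T → Ω → ℝ) (p r : ℝ)
    (π V : Fin (n + 1) → T → ℝ) (Di Vi : T → ℝ) (m : Fin (n + 1)) : ℝ :=
  (∑ t, π m t * Di t) + (∑ t, p * ∫ ω, allocF Da Θ Di r t ω ∂μ)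
    + (∑ t, ∫ ω, Vi t * (Di t - allocF Da Θ Di r t ω) ∂μ)
    - ∑ t, ∫ ω, (V m t - p) * (Di t - allocF Da Θ Di r t ω) ∂μ

/-- Cost `CU_i(0)` of a user with demand `Di` and values of lost load `Vi`
who buys no insurance. -/
def CUnoins (μ : Measure Ω) (Da : T → ℝ) (Θ : T → Ω → ℝ) (p r : ℝ)
    (Di Vi : T → ℝ) : ℝ :=
  (∑ t, p * ∫ ω, allocF Da Θ Di r t ω ∂μ)
    + ∑ t, ∫ ω, Vi t * (Di t - allocF Da Θ Di r t ω) ∂μ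

/-- IC condition: `π_k^t − π_m^t = (V_k^t − V_m^t)·E[1 − s^t/D_a^t]` for all `t, k, m`. -/
def ICcond (μ : Measure Ω) (Da : T → ℝ) (Θ : T → Ω → ℝ) (r : ℝ)
    (π V : Fin (n + 1) → T → ℝ) : Prop :=
  ∀ t k m, π k t - π m t = (V k t - V m t) * lostFrac μ Da Θ r t

/-- IR condition: `0 ≤ π_k^t ≤ (V_k^t − p)·E[1 − s^t/D_a^t]` for all `t, k`. -/
def IRcond (μ : Measure Ω) (Da : T → ℝ) (Θ : T → Ω → ℝ) (p r : ℝ)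
    (π V : Fin (n + 1) → T → ℝ) : Prop :=
  ∀ t k, 0 ≤ π k t ∧ π k t ≤ (V k t - p) * lostFrac μ Da Θ r t

/-- Total reimbursement `C_s^t(r,Θ^t) = Σ_k (V_k^t − p)(D_k^t − d_k^t)`. -/
def CsF (Da : T → ℝ) (Θ : T → Ω → ℝ) (D V : Fin (n + 1) → T → ℝ) (p r : ℝ)
    (t : T) (ω : Ω) : ℝ :=
  ∑ k, (V k t - p) * (D k t - allocF Da Θ (D k) r t ω)

/-- The utility's profit `f^Ins(r,π)` under the insurance contract. -/
def fIns (μ : Measure Ω) (Da : T → ℝ) (Θ : T → Ω → ℝ) (D V : Fin (n + 1) → T → ℝ)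
    (p c : ℝ) (r : ℝ) (π : Fin (n + 1) → T → ℝ) : ℝ :=
  (∑ k, ∑ t, π k t * D k t) + (∑ t, p * ∫ ω, supplyF Da Θ r t ω ∂μ) - c * r
    - ∑ t, ∫ ω, CsF Da Θ D V p r t ω ∂μ

/-- The utility's profit `f^No(r)` without insurance. -/
def fNo (μ : Measure Ω) (Da : T → ℝ) (Θ : T → Ω → ℝ) (p c : ℝ) (r : ℝ) : ℝ :=
  (∑ t, p * ∫ ω, supplyF Da Θ r t ω ∂μ) - c * r

/-- The social cost `C^SO(r) = c_r·r + Σ_t E[C_s^t(r,Θ^t)]`. -/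
def CSO (μ : Measure Ω) (Da : T → ℝ) (Θ : T → Ω → ℝ) (D V : Fin (n + 1) → T → ℝ)
    (p c : ℝ) (r : ℝ) : ℝ :=
  c * r + ∑ t, ∫ ω, CsF Da Θ D V p r t ω ∂μ

/-- `g(r) := −Σ_t p·E[s^t] + c_r·r + Σ_t E[C_s^t] + ξ`. -/
def gReg (μ : Measure Ω) (Da : T → ℝ) (Θ : T → Ω → ℝ) (D V : Fin (n + 1) → T → ℝ)
    (p c ξ : ℝ) (r : ℝ) : ℝ :=
  -(∑ t, p * ∫ ω, supplyF Da Θ r t ω ∂μ) + c * r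
    + (∑ t, ∫ ω, CsF Da Θ D V p r t ω ∂μ) + ξ

/-- `f^l(r) = Σ_t Σ_k D_k^t·(V_k^t − V_1^t)·E[1 − s^t/D_a^t]`. -/
def fL (μ : Measure Ω) (Da : T → ℝ) (Θ : T → Ω → ℝ) (D V : Fin (n + 1) → T → ℝ)
    (r : ℝ) : ℝ :=
  ∑ t, ∑ k, D k t * (V k t - V 0 t) * lostFrac μ Da Θ r t

/-- `f^u(r) = Σ_t Σ_k D_k^t·(V_k^t − p)·E[1 − s^t/D_a^t]`. -/
def fU (μ : Measure Ω) (Da : T → ℝ) (Θ : T → Ω → ℝ) (D V : Fin (n + 1) → T → ℝ)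
    (p : ℝ) (r : ℝ) : ℝ :=
  ∑ t, ∑ k, D k t * (V k t - p) * lostFrac μ Da Θ r t

/-- Feasibility for Problem-Ins: `r ≥ 0`, regulated profit `f^Ins(r,π) ≥ ξ`, IC and IR. -/
def InsFeasible (μ : Measure Ω) (Da : T → ℝ) (Θ : T → Ω → ℝ)
    (D V : Fin (n + 1) → T → ℝ) (p c ξ : ℝ) (r : ℝ) (π : Fin (n + 1) → T → ℝ) : Prop :=
  0 ≤ r ∧ ξ ≤ fIns μ Da Θ D V p c r π ∧ ICcond μ Da Θ r π V ∧ IRcond μ Da Θ p r π V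

/-- Optimality for Problem-Ins: feasible and minimizing the total premium
`Σ_k Σ_t π_k^t D_k^t` among all feasible points. -/
def InsOptimal (μ : Measure Ω) (Da : T → ℝ) (Θ : T → Ω → ℝ)
    (D V : Fin (n + 1) → T → ℝ) (p c ξ : ℝ) (r : ℝ) (π : Fin (n + 1) → T → ℝ) : Prop :=
  InsFeasible μ Da Θ D V p c ξ r π ∧
    ∀ r' π', InsFeasible μ Da Θ D V p c ξ r' π' →
      (∑ k, ∑ t, π k t * D k t) ≤ ∑ k, ∑ t, π' k t * D k t


/-- reduction in users' total energy cost: users' total energy cost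
under the optimal insurance contract is no larger than under the no-insurance
benchmark. -/
theorem stmt17
    (μ : Measure Ω) [IsProbabilityMeasure μ] [Nonempty T]
    (Θ : T → Ω → ℝ) (hΘmeas : ∀ t, Measurable (Θ t))
    (hΘ01 : ∀ t ω, 0 ≤ Θ t ω ∧ Θ t ω ≤ 1)
    (D V : Fin (n + 1) → T → ℝ) (hD : ∀ k t, 0 < D k t)
    (hVmono : ∀ t, Monotone fun k => V k t)
    (Da : T → ℝ) (hDa : ∀ t, Da t = ∑ k, D k t)
    (p : ℝ) (hp0 : 0 ≤ p) (hpV : ∀ t, p ≤ V 0 t)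
    (c : ℝ) (hc : 0 < c) (ξ : ℝ) (hξ : 0 ≤ ξ)
    (hfeas : ∃ r' : ℝ, 0 ≤ r' ∧ ξ ≤ fNo μ Da Θ p c r')
    (rdd : ℝ) (hrdd : IsGreatest {r : ℝ | 0 ≤ r ∧ ξ ≤ fNo μ Da Θ p c r} rdd)
    (rstar : ℝ) (πstar : Fin (n + 1) → T → ℝ)
    (hopt : InsOptimal μ Da Θ D V p c ξ rstar πstar) :
    (∑ k, ∑ t, (πstar k t + p) * D k t) ≤
      (∑ t, p * ∫ ω, supplyF Da Θ rdd t ω ∂μ) +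
        ∑ t, ∑ k, V k t * ∫ ω, (D k t - allocF Da Θ (D k) rdd t ω) ∂μ := by
  obtain ⟨⟨hr0, hξno⟩, hub⟩ := hrdd
  have hDa0 : ∀ t, 0 < Da t := fun t => by
    rw [hDa t]; exact Finset.sum_pos (fun k _ => hD k t) Finset.univ_nonempty
  have hsmeas : ∀ t, Measurable (fun ω => supplyF Da Θ rdd t ω) := fun t =>
    measurable_const.min (measurable_const.mul (hΘmeas t))
  have hs0 : ∀ t ω, 0 ≤ supplyF Da Θ rdd t ω := fun t ω =>
    le_min (hDa0 t).le (mul_nonneg hr0 (hΘ01 t ω).1)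
  have hsle : ∀ t ω, supplyF Da Θ rdd t ω ≤ Da t := fun t ω => min_le_left _ _
  have hsint : ∀ t, Integrable (fun ω => supplyF Da Θ rdd t ω) μ := fun t =>
    (integrable_const (Da t)).mono' (hsmeas t).aestronglyMeasurable
      (Filter.Eventually.of_forall fun ω => by
        rw [Real.norm_eq_abs, abs_of_nonneg (hs0 t ω)]; exact hsle t ω)
  have hL : ∀ t, lostFrac μ Da Θ rdd t = 1 - (∫ ω, supplyF Da Θ rdd t ω ∂μ) / Da t := by
    intro t
    rw [lostFrac, integral_sub (integrable_const 1) ((hsint t).div_const _),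
      integral_const, probReal_univ, smul_eq_mul, one_mul,
      integral_div]
  have hL0 : ∀ t, 0 ≤ lostFrac μ Da Θ rdd t := fun t =>
    integral_nonneg fun ω =>
      sub_nonneg.2 (div_le_one_of_le₀ (hsle t ω) (hDa0 t).le)
  have hIntS : ∀ t, ∫ ω, supplyF Da Θ rdd t ω ∂μ = Da t * (1 - lostFrac μ Da Θ rdd t) := by
    intro t
    rw [hL t, sub_sub_cancel, mul_comm, div_mul_cancel₀ _ (hDa0 t).ne']
  have hallocpt : ∀ (k : Fin (n + 1)) t ω, D k t - allocF Da Θ (D k) rdd t ω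
      = D k t * (1 - supplyF Da Θ rdd t ω / Da t) := by
    intro k t ω
    rw [allocF]; ring
  have hAint : ∀ (k : Fin (n + 1)) t,
      Integrable (fun ω => D k t - allocF Da Θ (D k) rdd t ω) μ := by
    intro k t
    simp only [hallocpt]
    exact ((integrable_const 1).sub ((hsint t).div_const _)).const_mul _
  have hAlloc : ∀ (k : Fin (n + 1)) t, ∫ ω, (D k t - allocF Da Θ (D k) rdd t ω) ∂μ
      = D k t * lostFrac μ Da Θ rdd t := by
    intro k t
    simp only [hallocpt]
    rw [integral_const_mul, lostFrac]
  have hCs : ∀ t, ∫ ω, CsF Da Θ D V p rdd t ω ∂μ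
      = ∑ k, (V k t - p) * (D k t * lostFrac μ Da Θ rdd t) := by
    intro t
    simp only [CsF]
    rw [integral_finset_sum _ (fun k _ => (hAint k t).const_mul _)]
    exact Finset.sum_congr rfl fun k _ => by rw [integral_const_mul, hAlloc]
  set π' : Fin (n + 1) → T → ℝ := fun k t => (V k t - p) * lostFrac μ Da Θ rdd t with hπ'
  have hfeas' : InsFeasible μ Da Θ D V p c ξ rdd π' := by
    refine ⟨hr0, ?_, ?_, ?_⟩
    · have heq : fIns μ Da Θ D V p c rdd π' = fNo μ Da Θ p c rdd := by
        rw [fIns, fNo]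
        have h1 : (∑ k, ∑ t, π' k t * D k t) = ∑ t, ∫ ω, CsF Da Θ D V p rdd t ω ∂μ := by
          rw [Finset.sum_comm]
          refine Finset.sum_congr rfl fun t _ => ?_
          rw [hCs t]
          exact Finset.sum_congr rfl fun k _ => by simp only [hπ']; ring
        rw [h1]; ring
      rw [heq]; exact hξno
    · intro t k m; simp only [hπ']; ring
    · intro t k
      refine ⟨mul_nonneg (by linarith [hpV t, hVmono t (Fin.zero_le k)]) (hL0 t), le_refl _⟩
  have hle := hopt.2 rdd π' hfeas'
  have hkey : ∀ t, p * ∫ ω, supplyF Da Θ rdd t ω ∂μ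
      + ∑ k, V k t * ∫ ω, (D k t - allocF Da Θ (D k) rdd t ω) ∂μ
      = ∑ k, (π' k t * D k t + p * D k t) := by
    intro t
    simp only [hAlloc, hIntS, hπ', hDa t, Finset.sum_mul, Finset.mul_sum]
    rw [← Finset.sum_add_distrib]
    exact Finset.sum_congr rfl fun k _ => by ring
  have hRHS : (∑ t, p * ∫ ω, supplyF Da Θ rdd t ω ∂μ)
      + (∑ t, ∑ k, V k t * ∫ ω, (D k t - allocF Da Θ (D k) rdd t ω) ∂μ)
      = (∑ k, ∑ t, π' k t * D k t) + ∑ k, ∑ t, p * D k t := by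
    rw [Finset.sum_comm (f := fun k t => π' k t * D k t),
      Finset.sum_comm (f := fun (k : Fin (n + 1)) t => p * D k t),
      ← Finset.sum_add_distrib, ← Finset.sum_add_distrib]
    refine Finset.sum_congr rfl fun t _ => ?_
    rw [← Finset.sum_add_distrib]
    exact hkey t
  have hLHS : (∑ k, ∑ t, (πstar k t + p) * D k t)
      = (∑ k, ∑ t, πstar k t * D k t) + ∑ k, ∑ t, p * D k t := by
    rw [← Finset.sum_add_distrib]
    refine Finset.sum_congr rfl fun k _ => ?_
    rw [← Finset.sum_add_distrib]
    exact Finset.sum_congr rfl fun t _ => by ring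
  rw [hLHS, hRHS]
  linarith

end
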